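/- (Rockafellar–Uryasev representation, value part) If X is integrable with continuous CDF and P(X ≥ VaR_α(X)) = 1 − α > 0, then V(VaR_α(X)) = E[X | X ≥ VaR_α(X)], i.e., the minimum value of V equals CVaR_α(X). -/

import Mathlib

open MeasureTheory

/-- Rockafellar–Uryasev representation, value part: if `X` is integrable with
`P(X ≥ ξ*) = 1 − α > 0` where `ξ* = VaR_α(X)`, then
`V(ξ*) = E[X | X ≥ ξ*] = E[X·1{X ≥ ξ*}] / P(X ≥ ξ*)`, i.e. `min V = CVaR_α(X)`. -/
theorem ru_value_eq_cvar {Ω : Type*} [MeasurableSpace Ω] (μ : Measure Ω)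
    [IsProbabilityMeasure μ] (X : Ω → ℝ) (hXm : Measurable X) (hX : Integrable X μ)
    (α : ℝ) (hα : α ∈ Set.Ioo (0 : ℝ) 1)
    (ξstar : ℝ) (hξ : ξstar = sInf {ξ : ℝ | α ≤ (μ {ω | X ω ≤ ξ}).toReal})
    (hmass : (μ {ω | ξstar ≤ X ω}).toReal = 1 - α) :
    ξstar + (1 - α)⁻¹ * ∫ ω, max (X ω - ξstar) 0 ∂μ =
      (∫ ω in {ω | ξstar ≤ X ω}, X ω ∂μ) / (μ {ω | ξstar ≤ X ω}).toReal := by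
  have hα1 : (0:ℝ) < 1 - α := by linarith [hα.2]
  set s : Set Ω := {ω | ξstar ≤ X ω} with hs
  have hsm : MeasurableSet s := measurableSet_le measurable_const hXm
  have hind : ∀ ω, max (X ω - ξstar) 0 = s.indicator (fun ω => X ω - ξstar) ω := by
    intro ω
    by_cases h : ξstar ≤ X ω
    · rw [Set.indicator_of_mem (show ω ∈ s from h), max_eq_left (by linarith)]
    · rw [Set.indicator_of_notMem (show ω ∉ s from h),
        max_eq_right (by push_neg at h; linarith)]
  have h1 : ∫ ω, max (X ω - ξstar) 0 ∂μ = ∫ ω in s, (X ω - ξstar) ∂μ := by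
    rw [show (fun ω => max (X ω - ξstar) 0) = s.indicator (fun ω => X ω - ξstar) from
      funext hind, integral_indicator hsm]
  have hXint : IntegrableOn X s μ := hX.integrableOn
  have h2 : ∫ ω in s, (X ω - ξstar) ∂μ = (∫ ω in s, X ω ∂μ) - ξstar * (1 - α) := by
    rw [integral_sub hXint (integrableOn_const (measure_ne_top μ s))]
    rw [setIntegral_const, measureReal_def, hmass, smul_eq_mul]
    ring
  rw [h1, h2, hmass]
  field_simp
  ring
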